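/- In the m-gluing graph K_n +_m K'_n with n ≥ 5 and 1 ≤ m ≤ n−2, the Ricci curvature of the bridge edge (u_0, v_0) equals (4m − 2n + 4)/(n + m); in particular κ(u_0, v_0) ≥ 0 if and only if m ≥ (n−2)/2. -/

import Mathlib

open scoped Classical
noncomputable section

namespace OR

variable {V : Type*}

/-- The degree of a vertex. -/
def deg (G : SimpleGraph V) (x : V) : ℕ := Nat.card (G.neighborSet x)

/-- The simple random walk measure at a vertex. -/
def rw (G : SimpleGraph V) (x : V) : V → ℝ :=
  fun v => if G.Adj x v then ((deg G x : ℝ))⁻¹ else 0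

/-- A coupling between two measures on the vertex set. -/
def IsCoupling (μ ν : V → ℝ) (A : V → V → ℝ) : Prop :=
  (∀ u v, 0 ≤ A u v) ∧
  (Function.support fun p : V × V => A p.1 p.2).Finite ∧
  (∀ u, ∑ᶠ v, A u v = μ u) ∧ (∀ v, ∑ᶠ u, A u v = ν v)

/-- The 1-Wasserstein distance w.r.t. the graph distance. -/
def W (G : SimpleGraph V) (μ ν : V → ℝ) : ℝ :=
  sInf { r | ∃ A, IsCoupling μ ν A ∧ r = ∑ᶠ u, ∑ᶠ v, A u v * (G.dist u v : ℝ) }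

/-- The Ollivier–Ricci curvature. -/
def ricci (G : SimpleGraph V) (x y : V) : ℝ :=
  1 - W G (rw G x) (rw G y) / (G.dist x y : ℝ)

/-- The number of common neighbours of `x` and `y`. -/
def tri (G : SimpleGraph V) (x y : V) : ℕ := Nat.card {w | G.Adj x w ∧ G.Adj y w}



/-- Condition for a cross edge `u_i v_j` in the `m`-gluing graph. -/
def cross (m : ℕ) {n : ℕ} (i j : Fin n) : Prop :=
  ((i : ℕ) = 0 ∧ (j : ℕ) = 0) ∨ ((i : ℕ) = 0 ∧ 1 ≤ (j : ℕ) ∧ (j : ℕ) ≤ m) ∨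
    ((j : ℕ) = 0 ∧ 1 ≤ (i : ℕ) ∧ (i : ℕ) ≤ m)

/-- Adjacency of the `m`-gluing graph: `Sum.inl` is `K_n`, `Sum.inr` is `K'_n`. -/
def glueAdj (n m : ℕ) : Fin n ⊕ Fin n → Fin n ⊕ Fin n → Prop
  | .inl i, .inl j => i ≠ j
  | .inr i, .inr j => i ≠ j
  | .inl i, .inr j => cross m i j
  | .inr j, .inl i => cross m i j

/-- The `m`-gluing graph `K_n +_m K'_n`. -/
def glue (n m : ℕ) : SimpleGraph (Fin n ⊕ Fin n) where
  Adj := glueAdj n m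
  symm := by
    constructor
    rintro (i | i) (j | j) h <;> simp only [glueAdj] at h ⊢
    · exact h.symm
    · exact h
    · exact h
    · exact h.symm
  loopless := by
    constructor
    rintro (i | i) h <;> simp only [glueAdj] at h <;> exact h rfl

end OR

namespace GlueProof
open OR Finset

variable {V : Type*}

lemma walk_lip {G : SimpleGraph V} (g : V → ℝ)
    (hg : ∀ a b, G.Adj a b → g a - g b ≤ 1) :
    ∀ {u v : V} (p : G.Walk u v), g u - g v ≤ p.length := by
  intro u v p
  induction p with
  | nil => simp
  | @cons a b c h p ih =>
    have h1 := hg _ _ h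
    simp only [SimpleGraph.Walk.length_cons]
    push_cast
    linarith

lemma lip_le_dist {G : SimpleGraph V} (g : V → ℝ)
    (hg : ∀ a b, G.Adj a b → g a - g b ≤ 1) {u v : V} (h : G.Reachable u v) :
    g u - g v ≤ G.dist u v := by
  obtain ⟨p, hp⟩ := h.exists_walk_length_eq_dist
  have := walk_lip g hg p
  rw [hp] at this
  exact this

lemma sum_fin_piece {M : Type*} [CommSemiring M] (n m : ℕ) (h : m + 2 ≤ n) (a b c d : M) :
    ∑ j : Fin n, (if (j : ℕ) = 0 then a else if (j : ℕ) ≤ m then b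
      else if (j : ℕ) = m + 1 then c else d)
    = a + (m : M) * b + c + ((n - (m + 2) : ℕ) : M) * d := by
  set F : ℕ → M := fun j => if j = 0 then a else if j ≤ m then b else if j = m + 1 then c else d
    with hF
  rw [Fin.sum_univ_eq_sum_range F n]
  rw [Finset.range_eq_Ico]
  rw [← Finset.sum_Ico_consecutive F (Nat.zero_le (m + 2)) h]
  rw [← Finset.sum_Ico_consecutive F (Nat.zero_le (m + 1)) (by omega : m + 1 ≤ m + 2)]
  rw [← Finset.sum_Ico_consecutive F (Nat.zero_le 1) (by omega : 1 ≤ m + 1)]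
  have h1 : ∑ j ∈ Finset.Ico 0 1, F j = a := by simp [hF]
  have h2 : ∑ j ∈ Finset.Ico 1 (m + 1), F j = (m : M) * b := by
    have e : ∀ j ∈ Finset.Ico 1 (m + 1), F j = b := by
      intro j hj
      simp only [Finset.mem_Ico] at hj
      simp only [hF]
      rw [if_neg (by omega), if_pos (by omega)]
    rw [Finset.sum_congr rfl e, Finset.sum_const, Nat.card_Ico, nsmul_eq_mul]
    simp
  have h3 : ∑ j ∈ Finset.Ico (m + 1) (m + 2), F j = c := by
    have e : Finset.Ico (m + 1) (m + 2) = {m + 1} := by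
      ext x; simp only [Finset.mem_Ico, Finset.mem_singleton]; omega
    rw [e, Finset.sum_singleton]
    simp only [hF]
    rw [if_neg (by omega), if_neg (by omega)]
    simp
  have h4 : ∑ j ∈ Finset.Ico (m + 2) n, F j = ((n - (m + 2) : ℕ) : M) * d := by
    have e : ∀ j ∈ Finset.Ico (m + 2) n, F j = d := by
      intro j hj
      simp only [Finset.mem_Ico] at hj
      simp only [hF]
      rw [if_neg (by omega), if_neg (by omega), if_neg (by omega)]
    rw [Finset.sum_congr rfl e, Finset.sum_const, Nat.card_Ico, nsmul_eq_mul]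
  rw [h1, h2, h3, h4]

lemma sum_single {n : ℕ} (g : Fin n → ℝ) (j0 : Fin n) (h0 : ∀ j, j ≠ j0 → g j = 0) :
    ∑ j, g j = g j0 :=
  Finset.sum_eq_single j0 (fun b _ hb => h0 b hb) (by simp)

end GlueProof
namespace GlueProof

/-- The 1-Lipschitz potential function. -/
def fV (n m : ℕ) : Fin n ⊕ Fin n → ℝ
  | .inl j => if (j : ℕ) ≤ m then 2 else 3
  | .inr j => if (j : ℕ) ≤ m then 1 else 0

/-- The optimal coupling. -/
def Ac (n m : ℕ) : Fin n ⊕ Fin n → Fin n ⊕ Fin n → ℝ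
  | .inl i, .inl j =>
      if (i = j ∧ 1 ≤ (i : ℕ) ∧ (i : ℕ) ≤ m) ∨ ((i : ℕ) = m + 1 ∧ (j : ℕ) = 0)
        then ((n : ℝ) + m)⁻¹ else 0
  | .inr i, .inr j =>
      if (i = j ∧ 1 ≤ (i : ℕ) ∧ (i : ℕ) ≤ m) ∨ ((i : ℕ) = 0 ∧ (j : ℕ) = m + 1)
        then ((n : ℝ) + m)⁻¹ else 0
  | .inl i, .inr j => if i = j ∧ m + 2 ≤ (i : ℕ) then ((n : ℝ) + m)⁻¹ else 0
  | .inr _, .inl _ => 0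

open OR

variable {n m : ℕ}

lemma f_lip (hm : 1 ≤ m) : ∀ a b, (glue n m).Adj a b → fV n m a - fV n m b ≤ 1 := by
  rintro (i | i) (j | j) h
  · simp only [fV]; split_ifs <;> norm_num
  · have hc : OR.cross m i j := h
    simp only [OR.cross] at hc
    simp only [fV]
    split_ifs <;> first | (exfalso; omega) | norm_num
  · simp only [fV]; split_ifs <;> norm_num
  · simp only [fV]; split_ifs <;> norm_num

lemma reach (hn : 0 < n) (u v : Fin n ⊕ Fin n) : (glue n m).Reachable u v := by
  have h0 : ∀ x : Fin n ⊕ Fin n, (glue n m).Reachable x (Sum.inl (⟨0, hn⟩ : Fin n)) := by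
    rintro (i | i)
    · by_cases h : i = (⟨0, hn⟩ : Fin n)
      · exact h ▸ SimpleGraph.Reachable.refl _
      · exact SimpleGraph.Adj.reachable (show (glue n m).Adj (.inl i) (.inl ⟨0, hn⟩) from h)
    · have h2 : (glue n m).Adj (.inr (⟨0, hn⟩ : Fin n)) (.inl (⟨0, hn⟩ : Fin n)) :=
        Or.inl ⟨rfl, rfl⟩
      by_cases h : i = (⟨0, hn⟩ : Fin n)
      · exact h ▸ h2.reachable
      · exact (SimpleGraph.Adj.reachable
          (show (glue n m).Adj (.inr i) (.inr ⟨0, hn⟩) from h)).trans h2.reachable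
  exact (h0 u).trans (h0 v).symm

lemma card_nbr (x : Fin n ⊕ Fin n) :
    OR.deg (glue n m) x = ∑ y : Fin n ⊕ Fin n, (if (glue n m).Adj x y then 1 else 0) := by
  rw [OR.deg, Nat.card_eq_fintype_card, ← Finset.card_filter]
  exact Fintype.card_subtype _

lemma deg_u0 (hn : 5 ≤ n) (hm : 1 ≤ m) (hmn : m + 2 ≤ n) :
    OR.deg (glue n m) (.inl (⟨0, lt_of_lt_of_le (by norm_num) hn⟩ : Fin n)) = n + m := by
  rw [card_nbr, Fintype.sum_sum_type]
  have e1 : ∀ j : Fin n, (if (glue n m).Adj (.inl (⟨0, lt_of_lt_of_le (by norm_num) hn⟩ : Fin n)) (.inl j) then 1 else 0)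
      = (if (j : ℕ) = 0 then 0 else if (j : ℕ) ≤ m then 1 else if (j : ℕ) = m + 1 then 1 else 1) := by
    intro j
    have : (glue n m).Adj (.inl (⟨0, lt_of_lt_of_le (by norm_num) hn⟩ : Fin n)) (.inl j) ↔ ¬ (j : ℕ) = 0 := by
      constructor
      · intro h hj; exact h (Fin.ext hj.symm)
      · intro h hj; exact h (by rw [← hj])
    rw [if_congr this rfl rfl]
    split_ifs <;> omega
  have e2 : ∀ j : Fin n, (if (glue n m).Adj (.inl (⟨0, lt_of_lt_of_le (by norm_num) hn⟩ : Fin n)) (.inr j) then 1 else 0)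
      = (if (j : ℕ) = 0 then 1 else if (j : ℕ) ≤ m then 1 else if (j : ℕ) = m + 1 then 0 else 0) := by
    intro j
    have : (glue n m).Adj (.inl (⟨0, lt_of_lt_of_le (by norm_num) hn⟩ : Fin n)) (.inr j) ↔ (j : ℕ) ≤ m := by
      show OR.cross m _ j ↔ _
      simp only [OR.cross, Fin.val_mk, true_and, and_true]
      constructor
      · intro h; omega
      · intro h; omega
    rw [if_congr this rfl rfl]
    split_ifs <;> omega
  rw [Finset.sum_congr rfl fun j _ => e1 j, Finset.sum_congr rfl fun j _ => e2 j,
    sum_fin_piece n m hmn, sum_fin_piece n m hmn]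
  simp
  omega

lemma deg_v0 (hn : 5 ≤ n) (hm : 1 ≤ m) (hmn : m + 2 ≤ n) :
    OR.deg (glue n m) (.inr (⟨0, lt_of_lt_of_le (by norm_num) hn⟩ : Fin n)) = n + m := by
  rw [card_nbr, Fintype.sum_sum_type]
  have e1 : ∀ j : Fin n, (if (glue n m).Adj (.inr (⟨0, lt_of_lt_of_le (by norm_num) hn⟩ : Fin n)) (.inl j) then 1 else 0)
      = (if (j : ℕ) = 0 then 1 else if (j : ℕ) ≤ m then 1 else if (j : ℕ) = m + 1 then 0 else 0) := by
    intro j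
    have : (glue n m).Adj (.inr (⟨0, lt_of_lt_of_le (by norm_num) hn⟩ : Fin n)) (.inl j) ↔ (j : ℕ) ≤ m := by
      show OR.cross m j _ ↔ _
      simp only [OR.cross, Fin.val_mk, true_and, and_true]
      constructor
      · intro h; omega
      · intro h; omega
    rw [if_congr this rfl rfl]
    split_ifs <;> omega
  have e2 : ∀ j : Fin n, (if (glue n m).Adj (.inr (⟨0, lt_of_lt_of_le (by norm_num) hn⟩ : Fin n)) (.inr j) then 1 else 0)
      = (if (j : ℕ) = 0 then 0 else if (j : ℕ) ≤ m then 1 else if (j : ℕ) = m + 1 then 1 else 1) := by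
    intro j
    have : (glue n m).Adj (.inr (⟨0, lt_of_lt_of_le (by norm_num) hn⟩ : Fin n)) (.inr j) ↔ ¬ (j : ℕ) = 0 := by
      constructor
      · intro h hj; exact h (Fin.ext hj.symm)
      · intro h hj; exact h (by rw [← hj])
    rw [if_congr this rfl rfl]
    split_ifs <;> omega
  rw [Finset.sum_congr rfl fun j _ => e1 j, Finset.sum_congr rfl fun j _ => e2 j,
    sum_fin_piece n m hmn, sum_fin_piece n m hmn]
  simp
  omega

end GlueProof
namespace GlueProof
open OR

variable {n m : ℕ}

lemma mu_l (hn : 5 ≤ n) (hm : 1 ≤ m) (hmn : m + 2 ≤ n) (j : Fin n) :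
    OR.rw (glue n m) (.inl (⟨0, lt_of_lt_of_le (by norm_num) hn⟩ : Fin n)) (.inl j)
      = if (j : ℕ) = 0 then 0 else ((n : ℝ) + m)⁻¹ := by
  simp only [OR.rw, deg_u0 hn hm hmn]
  by_cases hj : (j : ℕ) = 0
  · rw [if_pos hj, if_neg]
    intro h
    exact h (Fin.ext hj.symm)
  · have hadj : (glue n m).Adj (.inl (⟨0, lt_of_lt_of_le (by norm_num) hn⟩ : Fin n)) (.inl j) := by
      intro h; exact hj (by rw [← h])
    rw [if_neg hj, if_pos hadj]
    push_cast
    ring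

lemma mu_r (hn : 5 ≤ n) (hm : 1 ≤ m) (hmn : m + 2 ≤ n) (j : Fin n) :
    OR.rw (glue n m) (.inl (⟨0, lt_of_lt_of_le (by norm_num) hn⟩ : Fin n)) (.inr j)
      = if (j : ℕ) ≤ m then ((n : ℝ) + m)⁻¹ else 0 := by
  simp only [OR.rw, deg_u0 hn hm hmn]
  have hiff : (glue n m).Adj (.inl (⟨0, lt_of_lt_of_le (by norm_num) hn⟩ : Fin n)) (.inr j) ↔ (j : ℕ) ≤ m := by
    show OR.cross m _ j ↔ _
    simp only [OR.cross, Fin.val_mk, true_and, and_true]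
    omega
  rw [if_congr hiff rfl rfl]
  split_ifs
  · push_cast; ring
  · rfl

lemma nu_l (hn : 5 ≤ n) (hm : 1 ≤ m) (hmn : m + 2 ≤ n) (j : Fin n) :
    OR.rw (glue n m) (.inr (⟨0, lt_of_lt_of_le (by norm_num) hn⟩ : Fin n)) (.inl j)
      = if (j : ℕ) ≤ m then ((n : ℝ) + m)⁻¹ else 0 := by
  simp only [OR.rw, deg_v0 hn hm hmn]
  have hiff : (glue n m).Adj (.inr (⟨0, lt_of_lt_of_le (by norm_num) hn⟩ : Fin n)) (.inl j) ↔ (j : ℕ) ≤ m := by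
    show OR.cross m j _ ↔ _
    simp only [OR.cross, Fin.val_mk, true_and, and_true]
    omega
  rw [if_congr hiff rfl rfl]
  split_ifs
  · push_cast; ring
  · rfl

lemma nu_r (hn : 5 ≤ n) (hm : 1 ≤ m) (hmn : m + 2 ≤ n) (j : Fin n) :
    OR.rw (glue n m) (.inr (⟨0, lt_of_lt_of_le (by norm_num) hn⟩ : Fin n)) (.inr j)
      = if (j : ℕ) = 0 then 0 else ((n : ℝ) + m)⁻¹ := by
  simp only [OR.rw, deg_v0 hn hm hmn]
  by_cases hj : (j : ℕ) = 0
  · rw [if_pos hj, if_neg]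
    intro h
    exact h (Fin.ext hj.symm)
  · have hadj : (glue n m).Adj (.inr (⟨0, lt_of_lt_of_le (by norm_num) hn⟩ : Fin n)) (.inr j) := by
      intro h; exact hj (by rw [← h])
    rw [if_neg hj, if_pos hadj]
    push_cast
    ring

lemma dist_bridge (hn : 5 ≤ n) :
    (glue n m).dist (.inl (⟨0, lt_of_lt_of_le (by norm_num) hn⟩ : Fin n)) (.inr (⟨0, lt_of_lt_of_le (by norm_num) hn⟩ : Fin n)) = 1 :=
  SimpleGraph.dist_eq_one_iff_adj.mpr (Or.inl ⟨rfl, rfl⟩)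

lemma dist_ll {i j : Fin n} (h : i ≠ j) : (glue n m).dist (.inl i) (.inl j) = 1 :=
  SimpleGraph.dist_eq_one_iff_adj.mpr h

lemma dist_rr {i j : Fin n} (h : i ≠ j) : (glue n m).dist (.inr i) (.inr j) = 1 :=
  SimpleGraph.dist_eq_one_iff_adj.mpr h

lemma dist_far (hn : 5 ≤ n) (hm : 1 ≤ m) (hmn : m + 2 ≤ n) {i : Fin n} (hi : m + 2 ≤ (i : ℕ)) :
    (glue n m).dist (.inl i) (.inr i) = 3 := by
  have h0 : (0 : ℕ) < n := by omega
  have ha1 : (glue n m).Adj (.inl i) (.inl (⟨0, h0⟩ : Fin n)) := by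
    intro h
    have : (i : ℕ) = 0 := congrArg Fin.val h
    omega
  have ha2 : (glue n m).Adj (.inl (⟨0, h0⟩ : Fin n)) (.inr (⟨0, h0⟩ : Fin n)) := Or.inl ⟨rfl, rfl⟩
  have ha3 : (glue n m).Adj (.inr (⟨0, h0⟩ : Fin n)) (.inr i) := by
    intro h
    have : (0 : ℕ) = (i : ℕ) := congrArg Fin.val h
    omega
  have hub : (glue n m).dist (.inl i) (.inr i) ≤ 3 := by
    have := SimpleGraph.dist_le
      (SimpleGraph.Walk.cons ha1 (SimpleGraph.Walk.cons ha2 (SimpleGraph.Walk.cons ha3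
        SimpleGraph.Walk.nil)))
    simpa using this
  have hlb : (3 : ℝ) ≤ (glue n m).dist (.inl i) (.inr i) := by
    have := lip_le_dist (fV n m) (f_lip hm) (reach h0 (.inl i) (.inr i))
    simp only [fV] at this
    rw [if_neg (by omega), if_neg (by omega)] at this
    linarith
  have : (3 : ℕ) ≤ (glue n m).dist (.inl i) (.inr i) := by exact_mod_cast hlb
  omega

end GlueProof
namespace GlueProof
open OR

variable {n m : ℕ}

lemma sum_eq_single_val (g : Fin n → ℝ) (j0 : Fin n) (h1 : ∀ j, j ≠ j0 → g j = 0)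
    {v : ℝ} (h2 : g j0 = v) : ∑ j, g j = v := by rw [sum_single g j0 h1, h2]

lemma row_l (hn : 5 ≤ n) (hm : 1 ≤ m) (hmn : m + 2 ≤ n) (i : Fin n) :
    (∑ j : Fin n, Ac n m (.inl i) (.inl j)) + (∑ j : Fin n, Ac n m (.inl i) (.inr j))
      = OR.rw (glue n m) (.inl (⟨0, lt_of_lt_of_le (by norm_num) hn⟩ : Fin n)) (.inl i) := by
  rw [mu_l hn hm hmn i]
  by_cases h0 : (i : ℕ) = 0
  · rw [if_pos h0]
    have s1 : (∑ j : Fin n, Ac n m (.inl i) (.inl j)) = 0 :=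
      Finset.sum_eq_zero fun j _ => by
        simp only [Ac]; rw [if_neg]; rintro (⟨rfl, h1, h2⟩ | ⟨h1, h2⟩) <;> omega
    have s2 : (∑ j : Fin n, Ac n m (.inl i) (.inr j)) = 0 :=
      Finset.sum_eq_zero fun j _ => by
        simp only [Ac]; rw [if_neg]; rintro ⟨rfl, h2⟩; omega
    rw [s1, s2, add_zero]
  rw [if_neg h0]
  by_cases h1 : (i : ℕ) ≤ m
  · have s1 : (∑ j : Fin n, Ac n m (.inl i) (.inl j)) = ((n : ℝ) + m)⁻¹ := by
      refine sum_eq_single_val _ i (fun j hj => ?_) ?_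
      · simp only [Ac]; rw [if_neg]; rintro (⟨h, _, _⟩ | ⟨e1, e2⟩)
        · exact hj h.symm
        · omega
      · simp only [Ac]; rw [if_pos (Or.inl ⟨by trivial, by omega, h1⟩)]
    have s2 : (∑ j : Fin n, Ac n m (.inl i) (.inr j)) = 0 :=
      Finset.sum_eq_zero fun j _ => by
        simp only [Ac]; rw [if_neg]; rintro ⟨rfl, h2⟩; omega
    rw [s1, s2, add_zero]
  by_cases h2 : (i : ℕ) = m + 1
  · have s1 : (∑ j : Fin n, Ac n m (.inl i) (.inl j)) = ((n : ℝ) + m)⁻¹ := by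
      refine sum_eq_single_val _ (⟨0, lt_of_lt_of_le (by norm_num) hn⟩ : Fin n) (fun j hj => ?_) ?_
      · simp only [Ac]; rw [if_neg]; rintro (⟨rfl, h3, h4⟩ | ⟨e1, e2⟩)
        · omega
        · exact hj (Fin.ext e2)
      · simp only [Ac]; rw [if_pos (Or.inr ⟨h2, by trivial⟩)]
    have s2 : (∑ j : Fin n, Ac n m (.inl i) (.inr j)) = 0 :=
      Finset.sum_eq_zero fun j _ => by
        simp only [Ac]; rw [if_neg]; rintro ⟨rfl, h3⟩; omega
    rw [s1, s2, add_zero]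
  · have s1 : (∑ j : Fin n, Ac n m (.inl i) (.inl j)) = 0 :=
      Finset.sum_eq_zero fun j _ => by
        simp only [Ac]; rw [if_neg]; rintro (⟨rfl, h3, h4⟩ | ⟨e1, e2⟩) <;> omega
    have s2 : (∑ j : Fin n, Ac n m (.inl i) (.inr j)) = ((n : ℝ) + m)⁻¹ := by
      refine sum_eq_single_val _ i (fun j hj => ?_) ?_
      · simp only [Ac]; rw [if_neg]; rintro ⟨h, _⟩; exact hj h.symm
      · simp only [Ac]; rw [if_pos ⟨by trivial, by omega⟩]
    rw [s1, s2, zero_add]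

lemma row_r (hn : 5 ≤ n) (hm : 1 ≤ m) (hmn : m + 2 ≤ n) (i : Fin n) :
    (∑ j : Fin n, Ac n m (.inr i) (.inl j)) + (∑ j : Fin n, Ac n m (.inr i) (.inr j))
      = OR.rw (glue n m) (.inl (⟨0, lt_of_lt_of_le (by norm_num) hn⟩ : Fin n)) (.inr i) := by
  rw [mu_r hn hm hmn i]
  have s1 : (∑ j : Fin n, Ac n m (.inr i) (.inl j)) = 0 :=
    Finset.sum_eq_zero fun j _ => rfl
  rw [s1, zero_add]
  by_cases h0 : (i : ℕ) = 0
  · rw [if_pos (by omega)]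
    refine sum_eq_single_val _ (⟨m + 1, by omega⟩ : Fin n) (fun j hj => ?_) ?_
    · simp only [Ac]; rw [if_neg]; rintro (⟨rfl, h3, h4⟩ | ⟨e1, e2⟩)
      · omega
      · exact hj (Fin.ext e2)
    · simp only [Ac]; rw [if_pos (Or.inr ⟨h0, by trivial⟩)]
  by_cases h1 : (i : ℕ) ≤ m
  · rw [if_pos h1]
    refine sum_eq_single_val _ i (fun j hj => ?_) ?_
    · simp only [Ac]; rw [if_neg]; rintro (⟨h, _, _⟩ | ⟨e1, e2⟩)
      · exact hj h.symm
      · omega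
    · simp only [Ac]; rw [if_pos (Or.inl ⟨by trivial, by omega, h1⟩)]
  · rw [if_neg h1]
    exact Finset.sum_eq_zero fun j _ => by
      simp only [Ac]; rw [if_neg]; rintro (⟨rfl, h3, h4⟩ | ⟨e1, e2⟩) <;> omega

lemma col_l (hn : 5 ≤ n) (hm : 1 ≤ m) (hmn : m + 2 ≤ n) (j : Fin n) :
    (∑ i : Fin n, Ac n m (.inl i) (.inl j)) + (∑ i : Fin n, Ac n m (.inr i) (.inl j))
      = OR.rw (glue n m) (.inr (⟨0, lt_of_lt_of_le (by norm_num) hn⟩ : Fin n)) (.inl j) := by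
  rw [nu_l hn hm hmn j]
  have s2 : (∑ i : Fin n, Ac n m (.inr i) (.inl j)) = 0 :=
    Finset.sum_eq_zero fun i _ => rfl
  rw [s2, add_zero]
  by_cases h0 : (j : ℕ) = 0
  · rw [if_pos (by omega)]
    refine sum_eq_single_val _ (⟨m + 1, by omega⟩ : Fin n) (fun i hi => ?_) ?_
    · simp only [Ac]; rw [if_neg]; rintro (⟨rfl, h3, h4⟩ | ⟨e1, e2⟩)
      · omega
      · exact hi (Fin.ext e1)
    · simp only [Ac]; rw [if_pos (Or.inr ⟨by trivial, h0⟩)]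
  by_cases h1 : (j : ℕ) ≤ m
  · rw [if_pos h1]
    refine sum_eq_single_val _ j (fun i hi => ?_) ?_
    · simp only [Ac]; rw [if_neg]; rintro (⟨h, _, _⟩ | ⟨e1, e2⟩)
      · exact hi h
      · omega
    · simp only [Ac]; rw [if_pos (Or.inl ⟨by trivial, by omega, h1⟩)]
  · rw [if_neg h1]
    exact Finset.sum_eq_zero fun i _ => by
      simp only [Ac]; rw [if_neg]; rintro (⟨rfl, h3, h4⟩ | ⟨e1, e2⟩) <;> omega

lemma col_r (hn : 5 ≤ n) (hm : 1 ≤ m) (hmn : m + 2 ≤ n) (j : Fin n) :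
    (∑ i : Fin n, Ac n m (.inl i) (.inr j)) + (∑ i : Fin n, Ac n m (.inr i) (.inr j))
      = OR.rw (glue n m) (.inr (⟨0, lt_of_lt_of_le (by norm_num) hn⟩ : Fin n)) (.inr j) := by
  rw [nu_r hn hm hmn j]
  by_cases h0 : (j : ℕ) = 0
  · rw [if_pos h0]
    have s1 : (∑ i : Fin n, Ac n m (.inl i) (.inr j)) = 0 :=
      Finset.sum_eq_zero fun i _ => by
        simp only [Ac]; rw [if_neg]; rintro ⟨rfl, h2⟩; omega
    have s2 : (∑ i : Fin n, Ac n m (.inr i) (.inr j)) = 0 :=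
      Finset.sum_eq_zero fun i _ => by
        simp only [Ac]; rw [if_neg]; rintro (⟨rfl, h3, h4⟩ | ⟨e1, e2⟩) <;> omega
    rw [s1, s2, add_zero]
  rw [if_neg h0]
  by_cases h1 : (j : ℕ) ≤ m
  · have s1 : (∑ i : Fin n, Ac n m (.inl i) (.inr j)) = 0 :=
      Finset.sum_eq_zero fun i _ => by
        simp only [Ac]; rw [if_neg]; rintro ⟨rfl, h2⟩; omega
    have s2 : (∑ i : Fin n, Ac n m (.inr i) (.inr j)) = ((n : ℝ) + m)⁻¹ := by
      refine sum_eq_single_val _ j (fun i hi => ?_) ?_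
      · simp only [Ac]; rw [if_neg]; rintro (⟨h, _, _⟩ | ⟨e1, e2⟩)
        · exact hi h
        · omega
      · simp only [Ac]; rw [if_pos (Or.inl ⟨by trivial, by omega, h1⟩)]
    rw [s1, s2, zero_add]
  by_cases h2 : (j : ℕ) = m + 1
  · have s1 : (∑ i : Fin n, Ac n m (.inl i) (.inr j)) = 0 :=
      Finset.sum_eq_zero fun i _ => by
        simp only [Ac]; rw [if_neg]; rintro ⟨rfl, h3⟩; omega
    have s2 : (∑ i : Fin n, Ac n m (.inr i) (.inr j)) = ((n : ℝ) + m)⁻¹ := by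
      refine sum_eq_single_val _ (⟨0, lt_of_lt_of_le (by norm_num) hn⟩ : Fin n) (fun i hi => ?_) ?_
      · simp only [Ac]; rw [if_neg]; rintro (⟨rfl, h3, h4⟩ | ⟨e1, e2⟩)
        · omega
        · exact hi (Fin.ext e1)
      · simp only [Ac]; rw [if_pos (Or.inr ⟨by trivial, h2⟩)]
    rw [s1, s2, zero_add]
  · have s1 : (∑ i : Fin n, Ac n m (.inl i) (.inr j)) = ((n : ℝ) + m)⁻¹ := by
      refine sum_eq_single_val _ j (fun i hi => ?_) ?_
      · simp only [Ac]; rw [if_neg]; rintro ⟨h, _⟩; exact hi h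
      · simp only [Ac]; rw [if_pos ⟨by trivial, by omega⟩]
    have s2 : (∑ i : Fin n, Ac n m (.inr i) (.inr j)) = 0 :=
      Finset.sum_eq_zero fun i _ => by
        simp only [Ac]; rw [if_neg]; rintro (⟨rfl, h3, h4⟩ | ⟨e1, e2⟩) <;> omega
    rw [s1, s2, add_zero]

end GlueProof
namespace GlueProof
open OR

variable {n m : ℕ}

lemma costrow_l (hn : 5 ≤ n) (hm : 1 ≤ m) (hmn : m + 2 ≤ n) (i : Fin n) :
    (∑ j : Fin n, Ac n m (.inl i) (.inl j) * ((glue n m).dist (.inl i) (.inl j) : ℝ))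
      + (∑ j : Fin n, Ac n m (.inl i) (.inr j) * ((glue n m).dist (.inl i) (.inr j) : ℝ))
      = (if (i : ℕ) = 0 then 0 else if (i : ℕ) ≤ m then 0 else if (i : ℕ) = m + 1
          then ((n : ℝ) + m)⁻¹ else 3 * ((n : ℝ) + m)⁻¹) := by
  by_cases h0 : (i : ℕ) = 0
  · rw [if_pos h0]
    have s1 : (∑ j : Fin n, Ac n m (.inl i) (.inl j) * ((glue n m).dist (.inl i) (.inl j) : ℝ)) = 0 :=
      Finset.sum_eq_zero fun j _ => by
        simp only [Ac]; rw [if_neg, zero_mul]; rintro (⟨rfl, h1, h2⟩ | ⟨h1, h2⟩) <;> omega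
    have s2 : (∑ j : Fin n, Ac n m (.inl i) (.inr j) * ((glue n m).dist (.inl i) (.inr j) : ℝ)) = 0 :=
      Finset.sum_eq_zero fun j _ => by
        simp only [Ac]; rw [if_neg, zero_mul]; rintro ⟨rfl, h2⟩; omega
    rw [s1, s2, add_zero]
  rw [if_neg h0]
  by_cases h1 : (i : ℕ) ≤ m
  · rw [if_pos h1]
    have s1 : (∑ j : Fin n, Ac n m (.inl i) (.inl j) * ((glue n m).dist (.inl i) (.inl j) : ℝ)) = 0 := by
      refine sum_eq_single_val _ i (fun j hj => ?_) ?_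
      · simp only [Ac]; rw [if_neg, zero_mul]; rintro (⟨h, _, _⟩ | ⟨e1, e2⟩)
        · exact hj h.symm
        · omega
      · rw [SimpleGraph.dist_self, Nat.cast_zero, mul_zero]
    have s2 : (∑ j : Fin n, Ac n m (.inl i) (.inr j) * ((glue n m).dist (.inl i) (.inr j) : ℝ)) = 0 :=
      Finset.sum_eq_zero fun j _ => by
        simp only [Ac]; rw [if_neg, zero_mul]; rintro ⟨rfl, h2⟩; omega
    rw [s1, s2, add_zero]
  by_cases h2 : (i : ℕ) = m + 1
  · rw [if_neg h1, if_pos h2]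
    have s1 : (∑ j : Fin n, Ac n m (.inl i) (.inl j) * ((glue n m).dist (.inl i) (.inl j) : ℝ))
        = ((n : ℝ) + m)⁻¹ := by
      refine sum_eq_single_val _ (⟨0, lt_of_lt_of_le (by norm_num) hn⟩ : Fin n) (fun j hj => ?_) ?_
      · simp only [Ac]; rw [if_neg, zero_mul]; rintro (⟨rfl, h3, h4⟩ | ⟨e1, e2⟩)
        · omega
        · exact hj (Fin.ext e2)
      · have hd : (glue n m).dist (.inl i) (.inl (⟨0, lt_of_lt_of_le (by norm_num) hn⟩ : Fin n)) = 1 :=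
          dist_ll (fun h => h0 (congrArg Fin.val h))
        simp only [Ac]
        rw [if_pos (Or.inr ⟨h2, by trivial⟩), hd, Nat.cast_one, mul_one]
    have s2 : (∑ j : Fin n, Ac n m (.inl i) (.inr j) * ((glue n m).dist (.inl i) (.inr j) : ℝ)) = 0 :=
      Finset.sum_eq_zero fun j _ => by
        simp only [Ac]; rw [if_neg, zero_mul]; rintro ⟨rfl, h3⟩; omega
    rw [s1, s2, add_zero]
  · rw [if_neg h1, if_neg h2]
    have s1 : (∑ j : Fin n, Ac n m (.inl i) (.inl j) * ((glue n m).dist (.inl i) (.inl j) : ℝ)) = 0 :=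
      Finset.sum_eq_zero fun j _ => by
        simp only [Ac]; rw [if_neg, zero_mul]; rintro (⟨rfl, h3, h4⟩ | ⟨e1, e2⟩) <;> omega
    have s2 : (∑ j : Fin n, Ac n m (.inl i) (.inr j) * ((glue n m).dist (.inl i) (.inr j) : ℝ))
        = 3 * ((n : ℝ) + m)⁻¹ := by
      refine sum_eq_single_val _ i (fun j hj => ?_) ?_
      · simp only [Ac]; rw [if_neg, zero_mul]; rintro ⟨h, _⟩; exact hj h.symm
      · have hd : (glue n m).dist (.inl i) (.inr i) = 3 := dist_far hn hm hmn (by omega)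
        simp only [Ac]
        rw [if_pos ⟨by trivial, by omega⟩, hd]
        norm_num
        ring
    rw [s1, s2, zero_add]

lemma costrow_r (hn : 5 ≤ n) (hm : 1 ≤ m) (hmn : m + 2 ≤ n) (i : Fin n) :
    (∑ j : Fin n, Ac n m (.inr i) (.inl j) * ((glue n m).dist (.inr i) (.inl j) : ℝ))
      + (∑ j : Fin n, Ac n m (.inr i) (.inr j) * ((glue n m).dist (.inr i) (.inr j) : ℝ))
      = (if (i : ℕ) = 0 then ((n : ℝ) + m)⁻¹ else if (i : ℕ) ≤ m then 0
          else if (i : ℕ) = m + 1 then 0 else 0) := by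
  have s1 : (∑ j : Fin n, Ac n m (.inr i) (.inl j) * ((glue n m).dist (.inr i) (.inl j) : ℝ)) = 0 :=
    Finset.sum_eq_zero fun j _ => by show (0 : ℝ) * _ = 0; rw [zero_mul]
  rw [s1, zero_add]
  by_cases h0 : (i : ℕ) = 0
  · rw [if_pos h0]
    refine sum_eq_single_val _ (⟨m + 1, by omega⟩ : Fin n) (fun j hj => ?_) ?_
    · simp only [Ac]; rw [if_neg, zero_mul]; rintro (⟨rfl, h3, h4⟩ | ⟨e1, e2⟩)
      · omega
      · exact hj (Fin.ext e2)
    · have hd : (glue n m).dist (.inr i) (.inr (⟨m + 1, by omega⟩ : Fin n)) = 1 :=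
        dist_rr (fun h => by have := congrArg Fin.val h; simp only [Fin.val_mk] at this; omega)
      simp only [Ac]
      rw [if_pos (Or.inr ⟨h0, by trivial⟩), hd, Nat.cast_one, mul_one]
  rw [if_neg h0]
  by_cases h1 : (i : ℕ) ≤ m
  · rw [if_pos h1]
    refine sum_eq_single_val _ i (fun j hj => ?_) ?_
    · simp only [Ac]; rw [if_neg, zero_mul]; rintro (⟨h, _, _⟩ | ⟨e1, e2⟩)
      · exact hj h.symm
      · omega
    · rw [SimpleGraph.dist_self, Nat.cast_zero, mul_zero]
  · rw [if_neg h1, ite_self]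
    exact Finset.sum_eq_zero fun j _ => by
      simp only [Ac]; rw [if_neg, zero_mul]; rintro (⟨rfl, h3, h4⟩ | ⟨e1, e2⟩) <;> omega

lemma cost_val (hn : 5 ≤ n) (hm : 1 ≤ m) (hmn : m + 2 ≤ n) :
    (∑ u : Fin n ⊕ Fin n, ∑ v : Fin n ⊕ Fin n, Ac n m u v * ((glue n m).dist u v : ℝ))
      = (3 * (n : ℝ) - 3 * m - 4) * ((n : ℝ) + m)⁻¹ := by
  rw [Fintype.sum_sum_type]
  have e1 : ∀ i : Fin n, (∑ v : Fin n ⊕ Fin n, Ac n m (.inl i) v * ((glue n m).dist (.inl i) v : ℝ))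
      = (if (i : ℕ) = 0 then 0 else if (i : ℕ) ≤ m then 0 else if (i : ℕ) = m + 1
          then ((n : ℝ) + m)⁻¹ else 3 * ((n : ℝ) + m)⁻¹) := fun i => by
    rw [Fintype.sum_sum_type]; exact costrow_l hn hm hmn i
  have e2 : ∀ i : Fin n, (∑ v : Fin n ⊕ Fin n, Ac n m (.inr i) v * ((glue n m).dist (.inr i) v : ℝ))
      = (if (i : ℕ) = 0 then ((n : ℝ) + m)⁻¹ else if (i : ℕ) ≤ m then 0
          else if (i : ℕ) = m + 1 then 0 else 0) := fun i => by
    rw [Fintype.sum_sum_type]; exact costrow_r hn hm hmn i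
  rw [Finset.sum_congr rfl fun i _ => e1 i, Finset.sum_congr rfl fun i _ => e2 i,
    sum_fin_piece n m hmn, sum_fin_piece n m hmn, Nat.cast_sub hmn]
  push_cast
  ring

end GlueProof
namespace GlueProof
open OR

variable {n m : ℕ}

lemma Ac_coupling (hn : 5 ≤ n) (hm : 1 ≤ m) (hmn : m + 2 ≤ n) :
    IsCoupling (OR.rw (glue n m) (.inl (⟨0, lt_of_lt_of_le (by norm_num) hn⟩ : Fin n)))
      (OR.rw (glue n m) (.inr (⟨0, lt_of_lt_of_le (by norm_num) hn⟩ : Fin n))) (Ac n m) := by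
  refine ⟨?_, Set.toFinite _, ?_, ?_⟩
  · rintro (i | i) (j | j)
    · simp only [Ac]; split_ifs <;> positivity
    · simp only [Ac]; split_ifs <;> positivity
    · exact le_rfl
    · simp only [Ac]; split_ifs <;> positivity
  · rintro (i | i) <;> rw [finsum_eq_sum_of_fintype, Fintype.sum_sum_type]
    · exact row_l hn hm hmn i
    · exact row_r hn hm hmn i
  · rintro (j | j) <;> rw [finsum_eq_sum_of_fintype, Fintype.sum_sum_type]
    · exact col_l hn hm hmn j
    · exact col_r hn hm hmn j

lemma sum_f_mu (hn : 5 ≤ n) (hm : 1 ≤ m) (hmn : m + 2 ≤ n) :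
    (∑ u : Fin n ⊕ Fin n, fV n m u * OR.rw (glue n m) (.inl (⟨0, lt_of_lt_of_le (by norm_num) hn⟩ : Fin n)) u)
      = (3 * (n : ℝ) - 2) * ((n : ℝ) + m)⁻¹ := by
  rw [Fintype.sum_sum_type]
  have e1 : ∀ j : Fin n, fV n m (.inl j) * OR.rw (glue n m) (.inl (⟨0, lt_of_lt_of_le (by norm_num) hn⟩ : Fin n)) (.inl j)
      = (if (j : ℕ) = 0 then 0 else if (j : ℕ) ≤ m then 2 * ((n : ℝ) + m)⁻¹
          else if (j : ℕ) = m + 1 then 3 * ((n : ℝ) + m)⁻¹ else 3 * ((n : ℝ) + m)⁻¹) := fun j => by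
    rw [mu_l hn hm hmn j]; simp only [fV]; split_ifs <;> first | (exfalso; omega) | ring
  have e2 : ∀ j : Fin n, fV n m (.inr j) * OR.rw (glue n m) (.inl (⟨0, lt_of_lt_of_le (by norm_num) hn⟩ : Fin n)) (.inr j)
      = (if (j : ℕ) = 0 then ((n : ℝ) + m)⁻¹ else if (j : ℕ) ≤ m then ((n : ℝ) + m)⁻¹
          else if (j : ℕ) = m + 1 then 0 else 0) := fun j => by
    rw [mu_r hn hm hmn j]; simp only [fV]; split_ifs <;> first | (exfalso; omega) | ring
  rw [Finset.sum_congr rfl fun j _ => e1 j, Finset.sum_congr rfl fun j _ => e2 j,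
    sum_fin_piece n m hmn, sum_fin_piece n m hmn, Nat.cast_sub hmn]
  push_cast
  ring

lemma sum_f_nu (hn : 5 ≤ n) (hm : 1 ≤ m) (hmn : m + 2 ≤ n) :
    (∑ u : Fin n ⊕ Fin n, fV n m u * OR.rw (glue n m) (.inr (⟨0, lt_of_lt_of_le (by norm_num) hn⟩ : Fin n)) u)
      = (3 * (m : ℝ) + 2) * ((n : ℝ) + m)⁻¹ := by
  rw [Fintype.sum_sum_type]
  have e1 : ∀ j : Fin n, fV n m (.inl j) * OR.rw (glue n m) (.inr (⟨0, lt_of_lt_of_le (by norm_num) hn⟩ : Fin n)) (.inl j)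
      = (if (j : ℕ) = 0 then 2 * ((n : ℝ) + m)⁻¹ else if (j : ℕ) ≤ m then 2 * ((n : ℝ) + m)⁻¹
          else if (j : ℕ) = m + 1 then 0 else 0) := fun j => by
    rw [nu_l hn hm hmn j]; simp only [fV]; split_ifs <;> first | (exfalso; omega) | ring
  have e2 : ∀ j : Fin n, fV n m (.inr j) * OR.rw (glue n m) (.inr (⟨0, lt_of_lt_of_le (by norm_num) hn⟩ : Fin n)) (.inr j)
      = (if (j : ℕ) = 0 then 0 else if (j : ℕ) ≤ m then ((n : ℝ) + m)⁻¹
          else if (j : ℕ) = m + 1 then 0 else 0) := fun j => by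
    rw [nu_r hn hm hmn j]; simp only [fV]; split_ifs <;> first | (exfalso; omega) | ring
  rw [Finset.sum_congr rfl fun j _ => e1 j, Finset.sum_congr rfl fun j _ => e2 j,
    sum_fin_piece n m hmn, sum_fin_piece n m hmn, Nat.cast_sub hmn]
  push_cast
  ring

lemma W_val (hn : 5 ≤ n) (hm : 1 ≤ m) (hmn : m + 2 ≤ n) :
    W (glue n m) (OR.rw (glue n m) (.inl (⟨0, lt_of_lt_of_le (by norm_num) hn⟩ : Fin n)))
      (OR.rw (glue n m) (.inr (⟨0, lt_of_lt_of_le (by norm_num) hn⟩ : Fin n)))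
      = (3 * (n : ℝ) - 3 * m - 4) * ((n : ℝ) + m)⁻¹ := by
  set c0 : ℝ := ((n : ℝ) + m)⁻¹ with hc0
  set target : ℝ := (3 * (n : ℝ) - 3 * m - 4) * c0 with htarget
  set S := { r | ∃ A, IsCoupling (OR.rw (glue n m) (.inl (⟨0, lt_of_lt_of_le (by norm_num) hn⟩ : Fin n)))
      (OR.rw (glue n m) (.inr (⟨0, lt_of_lt_of_le (by norm_num) hn⟩ : Fin n))) A ∧
      r = ∑ᶠ u, ∑ᶠ v, A u v * ((glue n m).dist u v : ℝ) } with hS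
  have hlow : ∀ r ∈ S, target ≤ r := by
    rintro r ⟨A, hA, rfl⟩
    simp only [finsum_eq_sum_of_fintype]
    have hrow : ∀ u, (∑ v, A u v) = OR.rw (glue n m) (.inl (⟨0, lt_of_lt_of_le (by norm_num) hn⟩ : Fin n)) u :=
      fun u => by rw [← finsum_eq_sum_of_fintype]; exact hA.2.2.1 u
    have hcol : ∀ v, (∑ u, A u v) = OR.rw (glue n m) (.inr (⟨0, lt_of_lt_of_le (by norm_num) hn⟩ : Fin n)) v :=
      fun v => by rw [← finsum_eq_sum_of_fintype]; exact hA.2.2.2 v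
    have key : (∑ u, ∑ v, A u v * (fV n m u - fV n m v))
        ≤ ∑ u, ∑ v, A u v * ((glue n m).dist u v : ℝ) := by
      refine Finset.sum_le_sum fun u _ => Finset.sum_le_sum fun v _ => ?_
      exact mul_le_mul_of_nonneg_left
        (lip_le_dist (fV n m) (f_lip hm) (reach (by omega) u v)) (hA.1 u v)
    have expand : (∑ u, ∑ v, A u v * (fV n m u - fV n m v))
        = (∑ u, fV n m u * OR.rw (glue n m) (.inl (⟨0, lt_of_lt_of_le (by norm_num) hn⟩ : Fin n)) u)
          - ∑ v, fV n m v * OR.rw (glue n m) (.inr (⟨0, lt_of_lt_of_le (by norm_num) hn⟩ : Fin n)) v := by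
      have step : ∀ u, (∑ v, A u v * (fV n m u - fV n m v))
          = fV n m u * (∑ v, A u v) - ∑ v, fV n m v * A u v := by
        intro u
        rw [Finset.mul_sum, ← Finset.sum_sub_distrib]
        exact Finset.sum_congr rfl fun v _ => by ring
      rw [Finset.sum_congr rfl fun u _ => step u, Finset.sum_sub_distrib]
      congr 1
      · exact Finset.sum_congr rfl fun u _ => by rw [hrow u]
      · rw [Finset.sum_comm]
        exact Finset.sum_congr rfl fun v _ => by
          rw [← Finset.mul_sum, hcol v]
    calc target = (∑ u, fV n m u * OR.rw (glue n m) (.inl (⟨0, lt_of_lt_of_le (by norm_num) hn⟩ : Fin n)) u)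
          - ∑ v, fV n m v * OR.rw (glue n m) (.inr (⟨0, lt_of_lt_of_le (by norm_num) hn⟩ : Fin n)) v := by
            rw [sum_f_mu hn hm hmn, sum_f_nu hn hm hmn, htarget, hc0]; ring
      _ = ∑ u, ∑ v, A u v * (fV n m u - fV n m v) := expand.symm
      _ ≤ ∑ u, ∑ v, A u v * ((glue n m).dist u v : ℝ) := key
  have hmem : (3 * (n : ℝ) - 3 * m - 4) * c0 ∈ S := by
    refine ⟨Ac n m, Ac_coupling hn hm hmn, ?_⟩
    simp only [finsum_eq_sum_of_fintype]
    rw [cost_val hn hm hmn]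
  have hbdd : BddBelow S := ⟨target, fun r hr => hlow r hr⟩
  have h1 : W (glue n m) (OR.rw (glue n m) (.inl (⟨0, lt_of_lt_of_le (by norm_num) hn⟩ : Fin n)))
      (OR.rw (glue n m) (.inr (⟨0, lt_of_lt_of_le (by norm_num) hn⟩ : Fin n))) = sInf S := rfl
  rw [h1]
  refine le_antisymm (csInf_le hbdd hmem) (le_csInf ⟨_, hmem⟩ hlow)

end GlueProof
theorem glue_ricci_bridge_general (n m : ℕ) (hn : 5 ≤ n) (hm : 1 ≤ m) (hm' : m ≤ n - 2) :
    OR.ricci (OR.glue n m) (Sum.inl (⟨0, by omega⟩ : Fin n)) (Sum.inr (⟨0, by omega⟩ : Fin n))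
      = (4 * (m : ℝ) - 2 * n + 4) / ((n : ℝ) + m) ∧
    (0 ≤ OR.ricci (OR.glue n m) (Sum.inl (⟨0, by omega⟩ : Fin n))
        (Sum.inr (⟨0, by omega⟩ : Fin n)) ↔ ((n : ℝ) - 2) / 2 ≤ (m : ℝ)) := by
  have hmn : m + 2 ≤ n := by omega
  have h5 : (5 : ℝ) ≤ (n : ℝ) := by exact_mod_cast hn
  have hm0 : (0 : ℝ) ≤ (m : ℝ) := Nat.cast_nonneg m
  have hnm : (0 : ℝ) < (n : ℝ) + m := by linarith
  have hr : OR.ricci (OR.glue n m) (Sum.inl (⟨0, by omega⟩ : Fin n))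
      (Sum.inr (⟨0, by omega⟩ : Fin n)) = (4 * (m : ℝ) - 2 * n + 4) / ((n : ℝ) + m) := by
    rw [OR.ricci, GlueProof.W_val hn hm hmn, GlueProof.dist_bridge hn, Nat.cast_one, div_one]
    field_simp
    ring
  refine ⟨hr, ?_⟩
  rw [hr]
  constructor
  · intro h
    have h2 : 0 ≤ 4 * (m : ℝ) - 2 * n + 4 := by
      have h3 := mul_nonneg h hnm.le
      rwa [div_mul_cancel₀ _ (ne_of_gt hnm)] at h3
    linarith
  · intro h
    apply div_nonneg _ hnm.le
    linarith
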